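/- (Mollification estimate, display (5.21)) Let T > 0, κ > 0, m ∈ ℝ^d, and let g : [0,∞) → ℝ^d be measurable with ‖g(u)‖₁ ≤ 1 for all u ≥ 0. Define g^κ(s) = κ^{-1} ∫_s^{s+κ} g(u) du. Let M and M^κ be the unique continuous solutions on [0,T] of M(t) = m + ∫₀ᵗ g(s) ds − ∫₀ᵗ M(s) ds and M^κ(t) = m + ∫₀ᵗ g^κ(s) ds − ∫₀ᵗ M^κ(s) ds. Then sup_{t ∈ [0,T]} ‖M^κ(t) − M(t)‖₁ ≤ 3κ e^T. -/

import Mathlib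

open MeasureTheory

noncomputable section

/-- ℓ¹ norm on `ℝ^d`. -/
def l1 {d : ℕ} (v : Fin d → ℝ) : ℝ := ∑ x, |v x|

lemma intInt_of_bdd {f : ℝ → ℝ} (hm : Measurable f) (hb : ∀ u, |f u| ≤ 1) (a b : ℝ) :
    IntervalIntegrable f volume a b := by
  rw [intervalIntegrable_iff]
  exact Measure.integrableOn_of_bounded (measure_Ioc_lt_top).ne hm.aestronglyMeasurable
    (ae_of_all _ (by simpa using hb))

/-- ℓ¹ bound for the interval integral of a vector function with ℓ¹ norm ≤ 1. -/
lemma sum_abs_intInt_le {d : ℕ} {G : ℝ → Fin d → ℝ}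
    (hm : ∀ x, Measurable fun u => G u x) (hb : ∀ u x, |G u x| ≤ 1)
    (hl1 : ∀ u, ∑ x, |G u x| ≤ 1) {a b : ℝ} (hab : a ≤ b) :
    ∑ x, |∫ u in a..b, G u x| ≤ b - a := by
  have hint : ∀ x : Fin d, IntervalIntegrable (fun u => |G u x|) volume a b :=
    fun x => intInt_of_bdd (hm x).abs (fun u => by simpa using hb u x) a b
  calc ∑ x, |∫ u in a..b, G u x|
      ≤ ∑ x, ∫ u in a..b, |G u x| :=
        Finset.sum_le_sum fun x _ => intervalIntegral.abs_integral_le_integral_abs hab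
    _ = ∫ u in a..b, ∑ x, |G u x| :=
        (intervalIntegral.integral_finset_sum (fun x _ => hint x)).symm
    _ ≤ ∫ u in a..b, (1:ℝ) := by
        have hsum : IntervalIntegrable (fun u => ∑ x, |G u x|) volume a b := by
          have h := IntervalIntegrable.sum (μ := volume) (a := a) (b := b) Finset.univ
            (f := fun x u => |G u x|) (fun x _ => hint x)
          simpa [Finset.sum_fn] using h
        exact intervalIntegral.integral_mono_on hab hsum intervalIntegrable_const
          (fun u _ => hl1 u)
    _ = b - a := by simp

open intervalIntegral in
lemma H_bound {d : ℕ} {G : ℝ → Fin d → ℝ}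
    (hm : ∀ x, Measurable fun u => G u x) (hb : ∀ u x, |G u x| ≤ 1)
    (hl1 : ∀ u, ∑ x, |G u x| ≤ 1) {κ t : ℝ} (hκ : 0 < κ) (ht : 0 ≤ t) :
    ∑ x, |(∫ s in (0:ℝ)..t, κ⁻¹ * ∫ u in s..(s + κ), G u x) - ∫ s in (0:ℝ)..t, G s x| ≤ κ := by
  have hGint : ∀ (x : Fin d) (a b : ℝ), IntervalIntegrable (fun u => G u x) volume a b :=
    fun x => intInt_of_bdd (hm x) (fun u => hb u x)
  set P : Fin d → ℝ → ℝ := fun x y => ∫ u in (0:ℝ)..y, G u x with hP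
  have hPcont : ∀ x, Continuous (P x) :=
    fun x => intervalIntegral.continuous_primitive (hGint x) 0
  -- Fubini step
  have key : ∀ x, (∫ s in (0:ℝ)..t, κ⁻¹ * ∫ u in s..(s + κ), G u x)
      = κ⁻¹ * ∫ r in (0:ℝ)..κ, (P x (t + r) - P x r) := by
    intro x
    rw [intervalIntegral.integral_const_mul]
    congr 1
    have e1 : ∀ s : ℝ, (∫ u in s..(s + κ), G u x) = ∫ r in (0:ℝ)..κ, G (s + r) x := by
      intro s
      rw [intervalIntegral.integral_comp_add_left (fun u => G u x) s]
      simp [add_comm]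
    calc (∫ s in (0:ℝ)..t, ∫ u in s..(s + κ), G u x)
        = ∫ s in (0:ℝ)..t, ∫ r in (0:ℝ)..κ, G (s + r) x := by
          exact intervalIntegral.integral_congr (fun s _ => e1 s)
      _ = ∫ s in Set.Ioc (0:ℝ) t, ∫ r in Set.Ioc (0:ℝ) κ, G (s + r) x := by
          rw [intervalIntegral.integral_of_le ht]
          exact setIntegral_congr_fun measurableSet_Ioc
            (fun s _ => intervalIntegral.integral_of_le hκ.le)
      _ = ∫ r in Set.Ioc (0:ℝ) κ, ∫ s in Set.Ioc (0:ℝ) t, G (s + r) x := by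
          haveI h1 : IsFiniteMeasure (volume.restrict (Set.Ioc (0:ℝ) t)) :=
            ⟨by rw [Measure.restrict_apply_univ]; exact measure_Ioc_lt_top⟩
          haveI h2 : IsFiniteMeasure (volume.restrict (Set.Ioc (0:ℝ) κ)) :=
            ⟨by rw [Measure.restrict_apply_univ]; exact measure_Ioc_lt_top⟩
          refine MeasureTheory.integral_integral_swap ?_
          refine (integrable_const (1:ℝ)).mono' ?_ (ae_of_all _ fun p => by
            simpa [Function.uncurry] using hb (p.1 + p.2) x)
          exact ((hm x).comp measurable_add).aestronglyMeasurable
      _ = ∫ r in (0:ℝ)..κ, ∫ s in Set.Ioc (0:ℝ) t, G (s + r) x := by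
          rw [intervalIntegral.integral_of_le hκ.le]
      _ = ∫ r in (0:ℝ)..κ, (P x (t + r) - P x r) := by
          refine intervalIntegral.integral_congr (fun r _ => ?_)
          rw [← intervalIntegral.integral_of_le ht,
            intervalIntegral.integral_comp_add_right (fun u => G u x) r, zero_add]
          rw [hP]
          simp only []
          rw [add_comm t r, ← intervalIntegral.integral_interval_sub_left
            (hGint x 0 (r + t)) (hGint x 0 r), add_comm r t]
  have hQc : ∀ x, Continuous fun r : ℝ => P x (t + r) - P x r - P x t := fun x =>
    (((hPcont x).comp (continuous_const.add continuous_id)).sub (hPcont x)).sub continuous_const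
  have step : ∀ x, (∫ s in (0:ℝ)..t, κ⁻¹ * ∫ u in s..(s + κ), G u x) - ∫ s in (0:ℝ)..t, G s x
      = κ⁻¹ * ∫ r in (0:ℝ)..κ, (P x (t + r) - P x r - P x t) := by
    intro x
    have hcont1 : Continuous fun r : ℝ => P x (t + r) - P x r :=
      ((hPcont x).comp (continuous_const.add continuous_id)).sub (hPcont x)
    have hsub : (∫ r in (0:ℝ)..κ, (P x (t + r) - P x r - P x t))
        = (∫ r in (0:ℝ)..κ, (P x (t + r) - P x r)) - ∫ _r in (0:ℝ)..κ, P x t :=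
      intervalIntegral.integral_sub (hcont1.intervalIntegrable _ _) intervalIntegrable_const
    have hPt : (∫ s in (0:ℝ)..t, G s x) = P x t := rfl
    rw [key x, hPt, hsub, intervalIntegral.integral_const, smul_eq_mul, sub_zero, mul_sub,
      ← mul_assoc, inv_mul_cancel₀ hκ.ne', one_mul]
  have ptw : ∀ r ∈ Set.Icc (0:ℝ) κ, (∑ x, |P x (t + r) - P x r - P x t|) ≤ 2 * r := by
    intro r hr
    have h1 : ∀ x : Fin d, P x (t + r) - P x r - P x t
        = (∫ u in t..(t + r), G u x) - ∫ u in (0:ℝ)..r, G u x := by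
      intro x
      have h2 : P x (t + r) - P x t = ∫ u in t..(t + r), G u x :=
        intervalIntegral.integral_interval_sub_left (hGint x 0 (t + r)) (hGint x 0 t)
      have h3 : P x r = ∫ u in (0:ℝ)..r, G u x := rfl
      rw [← h2, h3]; ring
    calc (∑ x, |P x (t + r) - P x r - P x t|)
        ≤ ∑ x, (|∫ u in t..(t + r), G u x| + |∫ u in (0:ℝ)..r, G u x|) := by
          refine Finset.sum_le_sum fun x _ => ?_
          rw [h1 x]; exact abs_sub _ _
      _ = (∑ x, |∫ u in t..(t + r), G u x|) + ∑ x, |∫ u in (0:ℝ)..r, G u x| :=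
          Finset.sum_add_distrib
      _ ≤ ((t + r) - t) + (r - 0) := add_le_add
          (sum_abs_intInt_le hm hb hl1 (by linarith [hr.1]))
          (sum_abs_intInt_le hm hb hl1 hr.1)
      _ = 2 * r := by ring
  have S_le : (∑ x, |∫ r in (0:ℝ)..κ, (P x (t + r) - P x r - P x t)|) ≤ κ ^ 2 := by
    have hc : ∀ x, Continuous fun r : ℝ => |P x (t + r) - P x r - P x t| := fun x => (hQc x).abs
    calc (∑ x, |∫ r in (0:ℝ)..κ, (P x (t + r) - P x r - P x t)|)
        ≤ ∑ x, ∫ r in (0:ℝ)..κ, |P x (t + r) - P x r - P x t| :=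
          Finset.sum_le_sum fun x _ => intervalIntegral.abs_integral_le_integral_abs hκ.le
      _ = ∫ r in (0:ℝ)..κ, ∑ x, |P x (t + r) - P x r - P x t| :=
          (intervalIntegral.integral_finset_sum (fun x _ => ((hc x).intervalIntegrable _ _))).symm
      _ ≤ ∫ r in (0:ℝ)..κ, 2 * r := by
          refine intervalIntegral.integral_mono_on hκ.le ?_ ?_ ptw
          · exact (continuous_finset_sum _ fun x _ => hc x).intervalIntegrable _ _
          · exact (continuous_const.mul continuous_id).intervalIntegrable _ _
      _ = κ ^ 2 := by
          rw [intervalIntegral.integral_const_mul, integral_id]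
          ring
  have rw1 : (∑ x, |(∫ s in (0:ℝ)..t, κ⁻¹ * ∫ u in s..(s + κ), G u x) - ∫ s in (0:ℝ)..t, G s x|)
      = κ⁻¹ * ∑ x, |∫ r in (0:ℝ)..κ, (P x (t + r) - P x r - P x t)| := by
    rw [Finset.mul_sum]
    refine Finset.sum_congr rfl fun x _ => ?_
    rw [step x, abs_mul, abs_of_pos (inv_pos.mpr hκ)]
  rw [rw1]
  calc κ⁻¹ * ∑ x, |∫ r in (0:ℝ)..κ, (P x (t + r) - P x r - P x t)|
      ≤ κ⁻¹ * κ ^ 2 := mul_le_mul_of_nonneg_left S_le (inv_pos.mpr hκ).le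
    _ = κ := by rw [sq, ← mul_assoc, inv_mul_cancel₀ hκ.ne', one_mul]

/-- **(Mollification estimate, display (5.21).)** If `M` and `M^κ` solve the linear Volterra
equations driven by `g` and its mollification `g^κ(s) = κ⁻¹ ∫_s^{s+κ} g(u) du` respectively,
with `‖g(u)‖₁ ≤ 1`, then `sup_{t ∈ [0,T]} ‖M^κ(t) − M(t)‖₁ ≤ 3 κ e^T`. -/
theorem mollification_estimate {d : ℕ} (T κ : ℝ) (hT : 0 < T) (hκ : 0 < κ)
    (m : Fin d → ℝ) (g : ℝ → Fin d → ℝ)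
    (hgm : ∀ x, Measurable fun u => g u x)
    (hgb : ∀ u : ℝ, 0 ≤ u → l1 (g u) ≤ 1)
    (M Mκ : ℝ → Fin d → ℝ)
    (hMc : ∀ x, ContinuousOn (fun t => M t x) (Set.Icc 0 T))
    (hMκc : ∀ x, ContinuousOn (fun t => Mκ t x) (Set.Icc 0 T))
    (hM : ∀ t ∈ Set.Icc (0 : ℝ) T, ∀ x,
      M t x = m x + (∫ s in (0:ℝ)..t, g s x) - ∫ s in (0:ℝ)..t, M s x)
    (hMκ : ∀ t ∈ Set.Icc (0 : ℝ) T, ∀ x,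
      Mκ t x = m x + (∫ s in (0:ℝ)..t, κ⁻¹ * ∫ u in s..(s + κ), g u x)
        - ∫ s in (0:ℝ)..t, Mκ s x) :
    ∀ t ∈ Set.Icc (0 : ℝ) T, l1 (fun x => Mκ t x - M t x) ≤ 3 * κ * Real.exp T := by
  -- truncate `g` to `[0, ∞)` so that it is globally bounded
  set G : ℝ → Fin d → ℝ := fun u x => if 0 ≤ u then g u x else 0 with hGdef
  have hGm : ∀ x, Measurable fun u => G u x := fun x =>
    Measurable.ite measurableSet_Ici (hgm x) measurable_const
  have habs : ∀ u : ℝ, 0 ≤ u → ∀ x, |g u x| ≤ 1 := by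
    intro u hu x
    calc |g u x| ≤ ∑ y, |g u y| :=
          Finset.single_le_sum (f := fun y => |g u y|) (fun y _ => abs_nonneg _)
            (Finset.mem_univ x)
      _ ≤ 1 := hgb u hu
  have hGb : ∀ u x, |G u x| ≤ 1 := by
    intro u x
    by_cases hu : 0 ≤ u
    · simpa [hGdef, hu] using habs u hu x
    · simp [hGdef, hu]
  have hGl1 : ∀ u, ∑ x, |G u x| ≤ 1 := by
    intro u
    by_cases hu : 0 ≤ u
    · simpa [hGdef, hu, l1] using hgb u hu
    · simp [hGdef, hu]
  have hg_eq : ∀ t' : ℝ, 0 ≤ t' → ∀ x,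
      (∫ s in (0:ℝ)..t', g s x) = ∫ s in (0:ℝ)..t', G s x := by
    intro t' ht' x
    refine intervalIntegral.integral_congr fun s hs => ?_
    rw [Set.uIcc_of_le ht'] at hs
    simp [hGdef, hs.1]
  have hik_eq : ∀ t' : ℝ, 0 ≤ t' → ∀ x,
      (∫ s in (0:ℝ)..t', κ⁻¹ * ∫ u in s..(s + κ), g u x)
      = ∫ s in (0:ℝ)..t', κ⁻¹ * ∫ u in s..(s + κ), G u x := by
    intro t' ht' x
    refine intervalIntegral.integral_congr fun s hs => ?_
    rw [Set.uIcc_of_le ht'] at hs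
    congr 1
    refine intervalIntegral.integral_congr fun u hu => ?_
    rw [Set.uIcc_of_le (by linarith [hκ.le, hs.1] : s ≤ s + κ)] at hu
    have h0u : (0:ℝ) ≤ u := le_trans hs.1 hu.1
    simp [hGdef, h0u]
  set φ : ℝ → ℝ := fun s => ∑ x, |Mκ s x - M s x| with hφdef
  have hφc : ContinuousOn φ (Set.Icc 0 T) := by
    apply continuousOn_finset_sum
    intro x _
    exact ((hMκc x).sub (hMc x)).abs
  have hφnn : ∀ s, 0 ≤ φ s := fun s => Finset.sum_nonneg fun x _ => abs_nonneg _
  have hDint : ∀ (x : Fin d), ∀ t' ∈ Set.Icc (0:ℝ) T,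
      IntervalIntegrable (fun s => Mκ s x - M s x) volume 0 t' := by
    intro x t' ht'
    apply ContinuousOn.intervalIntegrable
    rw [Set.uIcc_of_le ht'.1]
    exact ((hMκc x).sub (hMc x)).mono (Set.Icc_subset_Icc le_rfl ht'.2)
  have hMint : ∀ (x : Fin d), ∀ t' ∈ Set.Icc (0:ℝ) T,
      IntervalIntegrable (fun s => M s x) volume 0 t' := by
    intro x t' ht'
    apply ContinuousOn.intervalIntegrable
    rw [Set.uIcc_of_le ht'.1]
    exact (hMc x).mono (Set.Icc_subset_Icc le_rfl ht'.2)
  have hMκint : ∀ (x : Fin d), ∀ t' ∈ Set.Icc (0:ℝ) T,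
      IntervalIntegrable (fun s => Mκ s x) volume 0 t' := by
    intro x t' ht'
    apply ContinuousOn.intervalIntegrable
    rw [Set.uIcc_of_le ht'.1]
    exact (hMκc x).mono (Set.Icc_subset_Icc le_rfl ht'.2)
  have key : ∀ t' ∈ Set.Icc (0:ℝ) T, φ t' ≤ κ + ∫ s in (0:ℝ)..t', φ s := by
    intro t' ht'
    have hDeq : ∀ x, Mκ t' x - M t' x
        = ((∫ s in (0:ℝ)..t', κ⁻¹ * ∫ u in s..(s + κ), G u x) - ∫ s in (0:ℝ)..t', G s x)
          - ∫ s in (0:ℝ)..t', (Mκ s x - M s x) := by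
      intro x
      have h1 := hM t' ht' x
      have h2 := hMκ t' ht' x
      rw [hik_eq t' ht'.1 x] at h2
      rw [hg_eq t' ht'.1 x] at h1
      have h3 : (∫ s in (0:ℝ)..t', (Mκ s x - M s x))
          = (∫ s in (0:ℝ)..t', Mκ s x) - ∫ s in (0:ℝ)..t', M s x :=
        intervalIntegral.integral_sub (hMκint x t' ht') (hMint x t' ht')
      rw [h1, h2, h3]; ring
    have hH : (∑ x, |(∫ s in (0:ℝ)..t', κ⁻¹ * ∫ u in s..(s + κ), G u x)
        - ∫ s in (0:ℝ)..t', G s x|) ≤ κ := H_bound hGm hGb hGl1 hκ ht'.1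
    have hI : (∑ x, |∫ s in (0:ℝ)..t', (Mκ s x - M s x)|) ≤ ∫ s in (0:ℝ)..t', φ s := by
      calc (∑ x, |∫ s in (0:ℝ)..t', (Mκ s x - M s x)|)
          ≤ ∑ x, ∫ s in (0:ℝ)..t', |Mκ s x - M s x| :=
            Finset.sum_le_sum fun x _ =>
              intervalIntegral.abs_integral_le_integral_abs ht'.1
        _ = ∫ s in (0:ℝ)..t', ∑ x, |Mκ s x - M s x| :=
            (intervalIntegral.integral_finset_sum
              (fun x _ => (hDint x t' ht').abs)).symm
        _ = ∫ s in (0:ℝ)..t', φ s := rfl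
    calc φ t' = ∑ x, |((∫ s in (0:ℝ)..t', κ⁻¹ * ∫ u in s..(s + κ), G u x)
            - ∫ s in (0:ℝ)..t', G s x) - ∫ s in (0:ℝ)..t', (Mκ s x - M s x)| := by
          refine Finset.sum_congr rfl fun x _ => ?_
          rw [hDeq x]
      _ ≤ ∑ x, (|(∫ s in (0:ℝ)..t', κ⁻¹ * ∫ u in s..(s + κ), G u x)
            - ∫ s in (0:ℝ)..t', G s x| + |∫ s in (0:ℝ)..t', (Mκ s x - M s x)|) :=
          Finset.sum_le_sum fun x _ => abs_sub _ _
      _ = (∑ x, |(∫ s in (0:ℝ)..t', κ⁻¹ * ∫ u in s..(s + κ), G u x)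
            - ∫ s in (0:ℝ)..t', G s x|) + ∑ x, |∫ s in (0:ℝ)..t', (Mκ s x - M s x)| :=
          Finset.sum_add_distrib
      _ ≤ κ + ∫ s in (0:ℝ)..t', φ s := add_le_add hH hI
  -- Grönwall
  have hfc : ContinuousOn (fun τ => κ + ∫ s in (0:ℝ)..τ, φ s) (Set.Icc 0 T) := by
    refine continuousOn_const.add ?_
    have h := intervalIntegral.continuousOn_primitive (μ := volume) (f := φ) (a := 0) (b := T)
      (hφc.integrableOn_Icc)
    exact h.congr fun τ hτ => intervalIntegral.integral_of_le hτ.1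
  have hfd : ∀ τ ∈ Set.Ico (0:ℝ) T,
      HasDerivWithinAt (fun τ => κ + ∫ s in (0:ℝ)..τ, φ s) (φ τ) (Set.Ici τ) τ := by
    intro τ hτ
    have hICC : Set.Icc τ T ∈ nhdsWithin τ (Set.Ioi τ) :=
      nhdsWithin_mono τ Set.Ioi_subset_Ici_self (Icc_mem_nhdsGE_of_mem ⟨le_rfl, hτ.2⟩)
    have hmeas : StronglyMeasurableAtFilter φ (nhdsWithin τ (Set.Ioi τ)) volume :=
      ⟨Set.Icc τ T, hICC,
        ((hφc.mono (Set.Icc_subset_Icc hτ.1 le_rfl)).aestronglyMeasurable measurableSet_Icc)⟩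
    have hcw : ContinuousWithinAt φ (Set.Ioi τ) τ := by
      have h1 : ContinuousWithinAt φ (Set.Icc 0 T) τ := hφc τ ⟨hτ.1, hτ.2.le⟩
      exact h1.mono_of_mem_nhdsWithin (Filter.mem_of_superset hICC (Set.Icc_subset_Icc hτ.1 le_rfl))
    have hφint : IntervalIntegrable φ volume 0 τ := by
      apply ContinuousOn.intervalIntegrable
      rw [Set.uIcc_of_le hτ.1]
      exact hφc.mono (Set.Icc_subset_Icc le_rfl hτ.2.le)
    exact (intervalIntegral.integral_hasDerivWithinAt_right (s := Set.Ici τ) (t := Set.Ioi τ)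
      hφint hmeas hcw).const_add κ
  have grb := norm_le_gronwallBound_of_norm_deriv_right_le
    (f := fun τ => κ + ∫ s in (0:ℝ)..τ, φ s) (f' := φ) (δ := κ) (K := 1) (ε := 0)
    (a := 0) (b := T) hfc hfd
    (by simp [Real.norm_eq_abs, abs_of_pos hκ])
    (by
      intro τ hτ
      have h1 : 0 ≤ ∫ s in (0:ℝ)..τ, φ s :=
        intervalIntegral.integral_nonneg hτ.1 (fun s _ => hφnn s)
      show ‖φ τ‖ ≤ 1 * ‖κ + ∫ s in (0:ℝ)..τ, φ s‖ + 0
      rw [Real.norm_eq_abs, Real.norm_eq_abs, abs_of_nonneg (hφnn τ),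
        abs_of_nonneg (by linarith), one_mul, add_zero]
      exact key τ ⟨hτ.1, hτ.2.le⟩)
  intro t ht
  have h2 := grb t ht
  rw [gronwallBound_ε0, Real.norm_eq_abs] at h2
  have h3 : φ t ≤ κ + ∫ s in (0:ℝ)..t, φ s := key t ht
  have h4 : κ + (∫ s in (0:ℝ)..t, φ s) ≤ κ * Real.exp (1 * (t - 0)) :=
    le_trans (le_abs_self _) h2
  have h5 : Real.exp t ≤ Real.exp T := Real.exp_le_exp.mpr ht.2
  have h6 : φ t ≤ κ * Real.exp T := by
    have : κ * Real.exp (1 * (t - 0)) = κ * Real.exp t := by norm_num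
    rw [this] at h4
    calc φ t ≤ κ * Real.exp t := le_trans h3 h4
      _ ≤ κ * Real.exp T := mul_le_mul_of_nonneg_left h5 hκ.le
  have hl1eq : l1 (fun x => Mκ t x - M t x) = φ t := rfl
  rw [hl1eq]
  nlinarith [mul_pos hκ (Real.exp_pos T)]

end
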